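/- Let L be the lower bidiagonal unipotent matrix with entries L_{pm} = δ_{pm} − \bar{λ}(f_{p−1}(|λ|²)/f_p(|λ|²)) δ_{p,m+1} (indices 0 ≤ p,m ≤ N−1). Then its inverse is given by (L^{−1})_{pq} = \bar{λ}^{p−q} f_q(|λ|²)/f_p(|λ|²) for q ≤ p, and 0 for q > p, where f_p(x) = (p+1)e_p(x) − x e_{p−1}(x) and e_p is the exponential polynomial; here it is assumed f_p(|λ|²) ≠ 0 for all p ≤ N−1. -/

import Mathlib

/-- Exponential polynomial `e_p(x) = ∑_{k=0}^p x^k/k!` (real argument). -/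
noncomputable def epolyR (p : ℕ) (x : ℝ) : ℝ := ∑ k ∈ Finset.range (p + 1), x ^ k / (Nat.factorial k)

/-- `f_p(x) = (p+1) e_p(x) - x e_{p-1}(x)`, with `e_{-1} = 0`. -/
noncomputable def fpolyR (p : ℕ) (x : ℝ) : ℝ :=
  (p + 1) * epolyR p x - x * ∑ k ∈ Finset.range p, x ^ k / (Nat.factorial k)

/-- The explicit inverse of the lower bidiagonal unipotent matrix `L`. -/
theorem bidiagonal_inverse (N : ℕ) (lam : ℂ)
    (hf : ∀ p : ℕ, p < N → fpolyR p (‖lam‖ ^ 2) ≠ 0) :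
    let L : Matrix (Fin N) (Fin N) ℂ := Matrix.of fun p m =>
      (if (p : ℕ) = (m : ℕ) then (1 : ℂ) else 0) -
        (if (p : ℕ) = (m : ℕ) + 1 then
          starRingEnd ℂ lam *
            ((fpolyR ((p : ℕ) - 1) (‖lam‖ ^ 2) /
              fpolyR (p : ℕ) (‖lam‖ ^ 2) : ℝ) : ℂ)
         else 0)
    let Linv : Matrix (Fin N) (Fin N) ℂ := Matrix.of fun p q =>
      if (q : ℕ) ≤ (p : ℕ) then
        (starRingEnd ℂ lam) ^ ((p : ℕ) - (q : ℕ)) *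
          ((fpolyR (q : ℕ) (‖lam‖ ^ 2) /
            fpolyR (p : ℕ) (‖lam‖ ^ 2) : ℝ) : ℂ)
      else 0
    L * Linv = 1 ∧ Linv * L = 1 := by
  intro L Linv
  set a : ℝ := ‖lam‖ ^ 2 with ha
  have key : L * Linv = 1 := by
    ext p q
    rw [Matrix.mul_apply]
    simp only [L, Linv, Matrix.of_apply, Matrix.one_apply, sub_mul]
    rw [Finset.sum_sub_distrib]
    have h1 : ∑ m : Fin N, (if (p : ℕ) = (m : ℕ) then (1 : ℂ) else 0) *
        (if (q : ℕ) ≤ (m : ℕ) then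
          (starRingEnd ℂ lam) ^ ((m : ℕ) - (q : ℕ)) *
            ((fpolyR (q : ℕ) a / fpolyR (m : ℕ) a : ℝ) : ℂ) else 0) =
        (if (q : ℕ) ≤ (p : ℕ) then
          (starRingEnd ℂ lam) ^ ((p : ℕ) - (q : ℕ)) *
            ((fpolyR (q : ℕ) a / fpolyR (p : ℕ) a : ℝ) : ℂ) else 0) := by
      rw [Finset.sum_eq_single p]
      · simp
      · intro m _ hm
        have : (p : ℕ) ≠ (m : ℕ) := fun h => hm (Fin.ext h).symm
        simp [this]
      · simp
    rw [h1]
    rcases Nat.eq_zero_or_pos (p : ℕ) with hp0 | hppos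
    · -- first row: no subdiagonal term
      have h2 : ∑ m : Fin N, (if (p : ℕ) = (m : ℕ) + 1 then
            starRingEnd ℂ lam * ((fpolyR ((p : ℕ) - 1) a / fpolyR (p : ℕ) a : ℝ) : ℂ) else 0) *
          (if (q : ℕ) ≤ (m : ℕ) then
            (starRingEnd ℂ lam) ^ ((m : ℕ) - (q : ℕ)) *
              ((fpolyR (q : ℕ) a / fpolyR (m : ℕ) a : ℝ) : ℂ) else 0) = 0 := by
        apply Finset.sum_eq_zero
        intro m _
        simp [hp0]
      rw [h2, sub_zero]
      by_cases hq : (q : ℕ) ≤ (p : ℕ)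
      · have hv : (p : ℕ) = (q : ℕ) := by omega
        have hpq : p = q := Fin.ext hv
        rw [if_pos hq, if_pos hpq, ← hv, Nat.sub_self, pow_zero, one_mul,
          div_self (hf _ p.isLt), Complex.ofReal_one]
      · have hne : p ≠ q := fun h => hq (h ▸ le_refl _)
        rw [if_neg hq, if_neg hne]
    · -- row p = k+1
      obtain ⟨k, hp0⟩ : ∃ k, (p : ℕ) = k + 1 := ⟨(p : ℕ) - 1, by omega⟩
      have hkN : k < N := by have := p.isLt; omega
      have h2 : ∑ m : Fin N, (if (p : ℕ) = (m : ℕ) + 1 then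
            starRingEnd ℂ lam * ((fpolyR ((p : ℕ) - 1) a / fpolyR (p : ℕ) a : ℝ) : ℂ) else 0) *
          (if (q : ℕ) ≤ (m : ℕ) then
            (starRingEnd ℂ lam) ^ ((m : ℕ) - (q : ℕ)) *
              ((fpolyR (q : ℕ) a / fpolyR (m : ℕ) a : ℝ) : ℂ) else 0) =
          (starRingEnd ℂ lam * ((fpolyR k a / fpolyR (p : ℕ) a : ℝ) : ℂ)) *
          (if (q : ℕ) ≤ k then
            (starRingEnd ℂ lam) ^ (k - (q : ℕ)) *
              ((fpolyR (q : ℕ) a / fpolyR k a : ℝ) : ℂ) else 0) := by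
        rw [Finset.sum_eq_single (⟨k, hkN⟩ : Fin N)]
        · simp [hp0]
        · intro m _ hm
          have : (p : ℕ) ≠ (m : ℕ) + 1 := by
            intro h
            exact hm (Fin.ext (by simp; omega))
          simp [this]
        · simp
      rw [h2]
      by_cases hq : (q : ℕ) ≤ k
      · have hqp : (q : ℕ) ≤ (p : ℕ) := by omega
        have hne : p ≠ q := by intro h; rw [h] at hp0; omega
        rw [if_pos hqp, if_pos hq, if_neg hne, hp0]
        have e1 : k + 1 - (q : ℕ) = (k - (q : ℕ)) + 1 := by omega
        rw [e1, sub_eq_zero, pow_succ]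
        have hfk : ((fpolyR k a : ℝ) : ℂ) ≠ 0 := Complex.ofReal_ne_zero.mpr (hf k hkN)
        have hfp : ((fpolyR (k + 1) a : ℝ) : ℂ) ≠ 0 :=
          Complex.ofReal_ne_zero.mpr (hf (k + 1) (by omega))
        push_cast at hfk hfp ⊢
        field_simp
      · by_cases hq2 : (q : ℕ) ≤ (p : ℕ)
        · have hpq : p = q := Fin.ext (by omega)
          rw [if_pos hq2, if_neg hq, if_pos hpq, mul_zero, sub_zero]
          have e0 : (p : ℕ) - (q : ℕ) = 0 := by omega
          have ev : (q : ℕ) = (p : ℕ) := by omega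
          rw [e0, pow_zero, one_mul, ev, div_self (hf _ p.isLt), Complex.ofReal_one]
        · have hne : p ≠ q := fun h => hq2 (h ▸ le_refl _)
          rw [if_neg hq2, if_neg hq, if_neg hne, mul_zero, sub_zero]
  exact ⟨key, mul_eq_one_comm.mp key⟩
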